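/- (Saalschütz-type reduction via Thomae) For nonnegative integer n and parameters a, b, d, e with d, e, and 1+b-e-n avoiding nonpositive-integer degeneracies: sum over k of ((a)_k (b)_k (-n)_k)/(k! (d)_k (e)_k) = ((e-b)_n/(e)_n) * sum over k of ((-n)_k (b)_k (d-a)_k)/(k! (d)_k (1+b-e-n)_k), i.e., the Thomae transformation 3F2(a,b,-n; d,e; 1) = ((e-b)_n/(e)_n) · 3F2(-n, b, d-a; d, 1+b-e-n; 1). -/

import Mathlib

/-- The Pochhammer symbol `(x)_k = x(x+1)⋯(x+k-1)`, `(x)_0 = 1`. -/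
def poch (x : ℚ) (k : ℕ) : ℚ := ∏ i ∈ Finset.range k, (x + i)

lemma poch_zero (x : ℚ) : poch x 0 = 1 := by simp [poch]

lemma poch_succ (x : ℚ) (k : ℕ) : poch x (k+1) = poch x k * (x + k) := by
  simp [poch, Finset.prod_range_succ]

lemma poch_add (x : ℚ) (j m : ℕ) : poch x (j + m) = poch x j * poch (x + j) m := by
  simp [poch, Finset.prod_range_add, add_assoc]

lemma poch_reverse (x : ℚ) (k : ℕ) : poch x k = (-1)^k * poch (1 - x - k) k := by
  rw [poch, ← Finset.prod_range_reflect, poch,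
    show ((-1:ℚ))^k = ∏ _i ∈ Finset.range k, (-1:ℚ) by simp,
    ← Finset.prod_mul_distrib]
  apply Finset.prod_congr rfl
  intro i hi
  simp only [Finset.mem_range] at hi
  have h1 : k - 1 - i = k - (i+1) := by omega
  rw [h1]
  push_cast [Nat.cast_sub (by omega : i + 1 ≤ k)]
  ring

lemma poch_nat (j k : ℕ) : poch (j + 1 : ℚ) k = (j + k).factorial / j.factorial := by
  induction k with
  | zero =>
      rw [poch_zero, Nat.add_zero, div_self]
      exact_mod_cast j.factorial_ne_zero
  | succ k ih =>
      rw [poch_succ, ih, ← Nat.add_assoc, Nat.factorial_succ]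
      push_cast
      field_simp
      ring

lemma vandermonde (m : ℕ) (x y : ℚ) :
    poch (x + y) m = ∑ k ∈ Finset.range (m + 1),
      (m.choose k : ℚ) * poch x k * poch y (m - k) := by
  induction m with
  | zero => simp [poch_zero]
  | succ m ih =>
    have step : ∀ k ∈ Finset.range (m+1),
        (m.choose k : ℚ) * poch x k * poch y (m-k) * (x + y + m)
          = (m.choose k : ℚ) * poch x k * poch y (m-k+1)
            + (m.choose k : ℚ) * poch x (k+1) * poch y (m-k) := by
      intro k hk
      simp only [Finset.mem_range] at hk
      rw [poch_succ, poch_succ, Nat.cast_sub (by omega : k ≤ m)]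
      ring
    have h1 : ∀ k ∈ Finset.range (m+1),
        ((m+1).choose (k+1) : ℚ) * poch x (k+1) * poch y (m+1-(k+1))
          = (m.choose (k+1) : ℚ) * poch x (k+1) * poch y (m-k)
            + (m.choose k : ℚ) * poch x (k+1) * poch y (m-k) := by
      intro k hk
      rw [Nat.choose_succ_succ, show m+1-(k+1) = m-k by omega]
      push_cast
      ring
    have hA : ∑ k ∈ Finset.range (m+1), (m.choose k : ℚ) * poch x k * poch y (m-k+1)
        = (∑ k ∈ Finset.range (m+1), (m.choose (k+1) : ℚ) * poch x (k+1) * poch y (m-k))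
          + (m.choose 0 : ℚ) * poch x 0 * poch y (m-0+1) := by
      rw [Finset.sum_range_succ (fun k => (m.choose (k+1) : ℚ) * poch x (k+1) * poch y (m-k)) m]
      rw [Nat.choose_succ_self]
      rw [Finset.sum_range_succ' (fun k => (m.choose k : ℚ) * poch x k * poch y (m-k+1)) m]
      simp only [Nat.cast_zero, zero_mul, mul_zero, add_zero]
      congr 1
      apply Finset.sum_congr rfl
      intro k hk
      simp only [Finset.mem_range] at hk
      rw [show m-(k+1)+1 = m-k by omega]
    calc poch (x+y) (m+1)
        = ∑ k ∈ Finset.range (m+1),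
            ((m.choose k : ℚ) * poch x k * poch y (m-k) * (x+y+(m:ℚ))) := by
          rw [poch_succ, ih, Finset.sum_mul]
      _ = (∑ k ∈ Finset.range (m+1), (m.choose k : ℚ) * poch x k * poch y (m-k+1))
          + ∑ k ∈ Finset.range (m+1), (m.choose k : ℚ) * poch x (k+1) * poch y (m-k) := by
          rw [← Finset.sum_add_distrib]
          exact Finset.sum_congr rfl step
      _ = ∑ k ∈ Finset.range (m+1+1),
            ((m+1).choose k : ℚ) * poch x k * poch y (m+1-k) := by
          rw [Finset.sum_range_succ'
            (fun k => ((m+1).choose k : ℚ) * poch x k * poch y (m+1-k)) (m+1)]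
          rw [Finset.sum_congr rfl h1, Finset.sum_add_distrib, hA]
          simp only [Nat.choose_zero_right, Nat.cast_one, one_mul, poch_zero,
            Nat.sub_zero, Nat.add_sub_cancel]
          ring

lemma chu_prod (m : ℕ) (B C : ℚ) :
    ∑ k ∈ Finset.range (m + 1),
        (-1)^k * (m.choose k : ℚ) * poch B k * poch (C + k) (m - k)
      = poch (C - B) m := by
  rw [← Finset.sum_range_reflect]
  have key : ∀ k ∈ Finset.range (m+1),
      (-1)^(m+1-1-k) * ((m.choose (m+1-1-k)) : ℚ) * poch B (m+1-1-k)
          * poch (C + (m+1-1-k : ℕ)) (m - (m+1-1-k))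
        = (-1)^m * ((m.choose k : ℚ) * poch (1 - C - m) k * poch B (m - k)) := by
    intro k hk
    simp only [Finset.mem_range] at hk
    rw [show m+1-1-k = m-k by omega, show m - (m-k) = k by omega,
      Nat.choose_symm (by omega : k ≤ m), poch_reverse (C + ((m-k : ℕ) : ℚ)) k,
      Nat.cast_sub (by omega : k ≤ m)]
    have h2 : (1 : ℚ) - (C + ((m:ℚ) - k)) - k = 1 - C - m := by ring
    have hsign : ((-1:ℚ))^(m-k) = (-1)^m * (-1)^k := by
      rw [← pow_add, show m + k = (m - k) + 2*k by omega, pow_add, pow_mul,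
        neg_one_sq, one_pow, mul_one]
    rw [h2, hsign]
    ring_nf
    rw [mul_comm k 2, pow_mul, neg_one_sq, one_pow, mul_one]
  rw [Finset.sum_congr rfl key, ← Finset.mul_sum, ← vandermonde]
  rw [poch_reverse (C - B) m]
  ring_nf

lemma poch_neg_nat (m k : ℕ) (hk : k ≤ m) :
    poch (-(m:ℚ)) k = (-1)^k * (m.factorial / (m-k).factorial : ℚ) := by
  rw [poch_reverse (-(m:ℚ)) k]
  congr 1
  have h1 : (1 : ℚ) - (-(m:ℚ)) - k = ((m - k : ℕ) : ℚ) + 1 := by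
    rw [Nat.cast_sub hk]; ring
  rw [h1, poch_nat, Nat.sub_add_cancel hk]

lemma chu (m : ℕ) (B C : ℚ) (hC : ∀ k ≤ m, poch C k ≠ 0) :
    ∑ k ∈ Finset.range (m + 1),
        poch (-(m:ℚ)) k * poch B k / ((Nat.factorial k : ℚ) * poch C k)
      = poch (C - B) m / poch C m := by
  rw [eq_div_iff (hC m le_rfl), Finset.sum_mul, ← chu_prod m B C]
  apply Finset.sum_congr rfl
  intro k hk
  simp only [Finset.mem_range] at hk
  have hk' : k ≤ m := by omega
  have hsplit : poch C m = poch C k * poch (C + k) (m - k) := by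
    rw [← poch_add, Nat.add_sub_cancel' hk']
  rw [hsplit, poch_neg_nat m k hk', Nat.cast_choose ℚ hk']
  have h1 : (Nat.factorial k : ℚ) ≠ 0 := by exact_mod_cast k.factorial_ne_zero
  have h2 : ((m-k).factorial : ℚ) ≠ 0 := by exact_mod_cast (m-k).factorial_ne_zero
  have h3 := hC k hk'
  field_simp

/-- Thomae's transformation for terminating balanced `₃F₂` series at argument `1`:
`₃F₂(a, b, -n; d, e; 1) = ((e-b)_n/(e)_n) · ₃F₂(-n, b, d-a; d, 1+b-e-n; 1)`,
valid for a nonnegative integer `n` whenever the denominator parameters avoid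
nonpositive-integer degeneracies in the range of summation. -/
theorem thomae_transformation (n : ℕ) (a b d e : ℚ)
    (hd : ∀ k ≤ n, poch d k ≠ 0) (he : ∀ k ≤ n, poch e k ≠ 0)
    (hf : ∀ k ≤ n, poch (1 + b - e - (n : ℚ)) k ≠ 0) :
    ∑ k ∈ Finset.range (n + 1),
        (poch a k * poch b k * poch (-(n : ℚ)) k) /
          ((Nat.factorial k : ℚ) * poch d k * poch e k) =
      (poch (e - b) n / poch e n) *
        ∑ k ∈ Finset.range (n + 1),
          (poch (-(n : ℚ)) k * poch b k * poch (d - a) k) /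
            ((Nat.factorial k : ℚ) * poch d k * poch (1 + b - e - (n : ℚ)) k) := by
  set f : ℚ := 1 + b - e - (n : ℚ) with hfdef
  -- the double-sum term
  set T : ℕ → ℕ → ℚ := fun k j =>
    (poch (-(n:ℚ)) k * poch b k / ((Nat.factorial k : ℚ) * poch f k)) *
      (poch (-(k:ℚ)) j * poch a j / ((Nat.factorial j : ℚ) * poch d j)) with hT
  have step1 : ∀ k ∈ Finset.range (n+1),
      (poch (-(n : ℚ)) k * poch b k * poch (d - a) k) /
          ((Nat.factorial k : ℚ) * poch d k * poch f k)
        = ∑ j ∈ Finset.range (k+1), T k j := by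
    intro k hk
    simp only [Finset.mem_range] at hk
    have hk' : k ≤ n := by omega
    have hchu := chu k a d (fun j hj => hd j (le_trans hj hk'))
    simp only [hT]
    rw [← Finset.mul_sum, hchu]
    have h1 : (Nat.factorial k : ℚ) ≠ 0 := by exact_mod_cast k.factorial_ne_zero
    have h2 := hd k hk'
    have h3 := hf k hk'
    field_simp
    try ring
    try tauto
  rw [Finset.sum_congr rfl step1]
  -- swap the sums
  have swap : ∑ k ∈ Finset.range (n+1), ∑ j ∈ Finset.range (k+1), T k j
      = ∑ j ∈ Finset.range (n+1), ∑ k ∈ Finset.Ico j (n+1), T k j := by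
    have := Finset.sum_Ico_Ico_comm 0 (n+1) (fun i j => T j i)
    simp only [Nat.Ico_zero_eq_range] at this
    exact this.symm
  rw [swap]
  -- reindex inner sums
  have reindex : ∀ j ∈ Finset.range (n+1),
      ∑ k ∈ Finset.Ico j (n+1), T k j = ∑ m ∈ Finset.range (n+1-j), T (j+m) j := by
    intro j _
    rw [Finset.sum_Ico_eq_sum_range]
  rw [Finset.sum_congr rfl reindex]
  -- evaluate inner sums via Chu–Vandermonde
  have inner : ∀ j ∈ Finset.range (n+1),
      ∑ m ∈ Finset.range (n+1-j), T (j+m) j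
        = ((-1)^j * poch (-(n:ℚ)) j * poch b j * poch a j /
            ((Nat.factorial j : ℚ) * poch d j * poch f j)) *
          (poch (1 - e - (n:ℚ)) (n-j) / poch (f + j) (n-j)) := by
    intro j hj
    simp only [Finset.mem_range] at hj
    have hj' : j ≤ n := by omega
    have hCj : ∀ m ≤ n - j, poch (f + j) m ≠ 0 := by
      intro m hm
      have h := hf (j + m) (by omega)
      rw [poch_add] at h
      exact fun h0 => h (by rw [h0, mul_zero])
    have hchu := chu (n-j) (b + j) (f + j) hCj
    have hcast : (-(((n-j : ℕ)):ℚ)) = (j:ℚ) - n := by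
      rw [Nat.cast_sub hj']; ring
    have hCB : f + (j:ℚ) - (b + (j:ℚ)) = 1 - e - (n:ℚ) := by rw [hfdef]; ring
    rw [hcast, hCB] at hchu
    have hnj : n + 1 - j = (n - j) + 1 := by omega
    rw [hnj, ← hchu, Finset.mul_sum]
    apply Finset.sum_congr rfl
    intro m hm
    simp only [Finset.mem_range] at hm
    have hm' : m ≤ n - j := by omega
    -- pointwise identity
    simp only [hT]
    rw [show ((j:ℕ)+(m:ℕ)) = j + m from rfl]
    rw [poch_add (-(n:ℚ)) j m, poch_add b j m, poch_add f j m,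
      poch_neg_nat (j+m) j (by omega)]
    have e1 : -(n:ℚ) + (j:ℚ) = (j:ℚ) - n := by ring
    have e2 : (j + m) - j = m := by omega
    rw [e1, e2]
    have hfac1 : ((j+m).factorial : ℚ) ≠ 0 := by exact_mod_cast (j+m).factorial_ne_zero
    have hfac2 : (m.factorial : ℚ) ≠ 0 := by exact_mod_cast m.factorial_ne_zero
    have hfac3 : (j.factorial : ℚ) ≠ 0 := by exact_mod_cast j.factorial_ne_zero
    have h2 := hd j hj'
    have h3 : poch f j ≠ 0 := hf j hj'
    have h4 : poch (f + j) m ≠ 0 := hCj m hm'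
    field_simp
  rw [Finset.sum_congr rfl inner, Finset.mul_sum]
  -- final per-term identity
  apply Finset.sum_congr rfl
  intro j hj
  simp only [Finset.mem_range] at hj
  have hj' : j ≤ n := by omega
  have E1 : poch f n = poch f j * poch (f + j) (n-j) := by
    rw [← poch_add, Nat.add_sub_cancel' hj']
  have E2 : poch (e - b) n = (-1)^n * poch f n := by
    rw [poch_reverse (e - b) n, hfdef]
    ring_nf
  have E3 : poch e n = (-1)^n * poch (1 - e - (n:ℚ)) n := by
    rw [poch_reverse e n]
  have E4 : poch (1 - e - (n:ℚ)) n
      = poch (1 - e - (n:ℚ)) (n-j) * poch (1 - e - (j:ℚ)) j := by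
    rw [show n = (n - j) + j by omega, poch_add]
    rw [show (n:ℕ) - j + j = n by omega]  -- restore outer cast occurrences
    congr 1
    rw [Nat.cast_sub hj']
    ring
  have E5 : poch e j = (-1)^j * poch (1 - e - (j:ℚ)) j := by
    rw [poch_reverse e j]
  -- nonvanishing
  have hen : poch e n ≠ 0 := he n le_rfl
  have hej : poch e j ≠ 0 := he j hj'
  have hfn : poch f n ≠ 0 := hf n le_rfl
  have hfj : poch f j ≠ 0 := hf j hj'
  have hfj2 : poch (f + j) (n-j) ≠ 0 := by
    intro h0; exact hfn (by rw [E1, h0, mul_zero])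
  have hfacj : (j.factorial : ℚ) ≠ 0 := by exact_mod_cast j.factorial_ne_zero
  have hdj := hd j hj'
  have h1en : poch (1 - e - (n:ℚ)) (n-j) * poch (1 - e - (j:ℚ)) j ≠ 0 := by
    intro h0
    apply hen
    rw [E3, E4, h0, mul_zero]
  have h1enj := (mul_ne_zero_iff.mp h1en).1
  have h1ej := (mul_ne_zero_iff.mp h1en).2
  rw [E2, E3, E4, E5, E1]
  field_simp
  rcases neg_one_pow_eq_or ℚ j with h | h <;> rcases neg_one_pow_eq_or ℚ n with h' | h' <;>
    rw [h] <;> ring
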